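/- Let p be an odd prime, e ≥ 1, a ∈ p·Z/p^e Z with a ≠ 0, and b a unit in Z/p^e Z. Define φ on Z/p^e Z by φ(x) = a·x⁻¹ + b for units x and φ(x) = b otherwise. Let v = v_p(a) ≥ 1 be the p-adic valuation of (a lift of) a, and let l = ⌈e / v⌉. Then for every x₀ ∈ Z/p^e Z, φ^l(x₀) = φ^{l-1}(b). In particular, φ has a unique eventually-attracting fixed point x̃ = φ^{l-1}(b) and every orbit reaches it. -/

import Mathlib

open scoped Classical

/-- Truncated p-adic valuation on `Z/p^e Z`: `min (max{k : p^k ∣ y}, e)`, with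
`vp 0 = e`. -/
def vp (p e : ℕ) (y : ZMod (p ^ e)) : ℕ :=
  if y = 0 then e else min (padicValNat p y.val) e

/-- For `a ∈ p·Z/p^e Z`, `a ≠ 0`, `b` a unit, with `v = v_p(a)` and
`l = ⌈e/v⌉`, every orbit of the inversive map satisfies
`φ^l(x₀) = φ^{l-1}(b)`, and `φ^{l-1}(b)` is a fixed point of `φ`. -/
theorem stmt10 (p : ℕ) (hp : p.Prime) (hp2 : p ≠ 2) (e : ℕ) (he : 1 ≤ e)
    (a b : ZMod (p ^ e)) (hpa : (p : ZMod (p ^ e)) ∣ a) (ha : a ≠ 0)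
    (hb : IsUnit b)
    (φ : ZMod (p ^ e) → ZMod (p ^ e))
    (hφ : ∀ x, φ x = if IsUnit x then a * x⁻¹ + b else b) :
    let v := vp p e a
    let l := (e + v - 1) / v
    (∀ x0 : ZMod (p ^ e), φ^[l] x0 = φ^[l - 1] b) ∧
    φ (φ^[l - 1] b) = φ^[l - 1] b := by
  intro v l
  haveI : Fact p.Prime := ⟨hp⟩
  haveI : NeZero (p ^ e) := ⟨pow_ne_zero e hp.ne_zero⟩
  have hene : e ≠ 0 := by omega
  -- divisibility by p in ZMod (p^e) vs p ∣ val
  have hdvd : ∀ x : ZMod (p ^ e), (p : ZMod (p ^ e)) ∣ x ↔ p ∣ x.val := by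
    intro x
    constructor
    · rintro ⟨c, rfl⟩
      rw [ZMod.val_mul]
      refine (Nat.dvd_mod_iff (dvd_pow_self p hene)).mpr ?_
      refine Dvd.dvd.mul_right ?_ _
      rw [ZMod.val_natCast]
      exact (Nat.dvd_mod_iff (dvd_pow_self p hene)).mpr dvd_rfl
    · rintro ⟨m, hm⟩
      refine ⟨(m : ZMod (p ^ e)), ?_⟩
      have : ((x.val : ℕ) : ZMod (p ^ e)) = x := by
        simp [ZMod.natCast_val, ZMod.cast_id]
      rw [← this, hm]
      push_cast
      ring
  -- units of ZMod (p^e)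
  have hunit : ∀ x : ZMod (p ^ e), IsUnit x ↔ ¬ p ∣ x.val := by
    intro x
    have h1 : ((x.val : ℕ) : ZMod (p ^ e)) = x := by
      simp [ZMod.natCast_val, ZMod.cast_id]
    have h2 := ZMod.isUnit_iff_coprime x.val (p ^ e)
    rw [h1] at h2
    rw [h2, Nat.coprime_pow_right_iff (by omega), Nat.coprime_comm]
    exact hp.coprime_iff_not_dvd
  have hunit' : ∀ x : ZMod (p ^ e), IsUnit x ↔ ¬ (p : ZMod (p ^ e)) ∣ x := by
    intro x; rw [hunit, hdvd]
  -- basic facts about v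
  have haval : a.val ≠ 0 := by
    intro h; exact ha (by rwa [ZMod.val_eq_zero] at h)
  have hv : v = min (padicValNat p a.val) e := by
    simp only [v, vp, if_neg ha]
  have hv1 : 1 ≤ v := by
    rw [hv]
    refine le_min ?_ he
    exact one_le_padicValNat_of_dvd haval ((hdvd a).mp hpa)
  have hpv : (p : ZMod (p ^ e)) ^ v ∣ a := by
    have h1 : p ^ v ∣ a.val := by
      refine dvd_trans (pow_dvd_pow p ?_) pow_padicValNat_dvd
      rw [hv]; exact min_le_left _ _
    have h2 : ((a.val : ℕ) : ZMod (p ^ e)) = a := by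
      simp [ZMod.natCast_val, ZMod.cast_id]
    rw [← h2]
    exact_mod_cast Nat.cast_dvd_cast h1
  -- base case
  have base : ∀ x, (p : ZMod (p ^ e)) ^ v ∣ φ x - b := by
    intro x
    rw [hφ]
    split_ifs
    · have : a * x⁻¹ + b - b = a * x⁻¹ := by ring
      rw [this]
      exact hpv.mul_right _
    · simp
  -- step
  have step : ∀ (k : ℕ) (x y : ZMod (p ^ e)), 1 ≤ k →
      (p : ZMod (p ^ e)) ^ k ∣ x - y → (p : ZMod (p ^ e)) ^ (k + v) ∣ φ x - φ y := by
    intro k x y hk hxy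
    have hpxy : (p : ZMod (p ^ e)) ∣ x - y :=
      dvd_trans (dvd_pow_self _ (by omega)) hxy
    have hux : IsUnit x ↔ IsUnit y := by
      rw [hunit' x, hunit' y]
      constructor
      · intro h hy
        exact h (by have := dvd_add hpxy hy; simpa using this)
      · intro h hx
        exact h (by have := dvd_sub hx hpxy; simpa using this)
    rw [hφ x, hφ y]
    by_cases hx : IsUnit x
    · have hy : IsUnit y := hux.mp hx
      rw [if_pos hx, if_pos hy]
      have hxinv := ZMod.mul_inv_of_unit x hx
      have hyinv := ZMod.mul_inv_of_unit y hy
      have key : a * x⁻¹ + b - (a * y⁻¹ + b) = a * (x⁻¹ * y⁻¹) * (y - x) := by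
        linear_combination (a * y⁻¹) * hxinv + (-(a * x⁻¹)) * hyinv
      rw [key]
      have hyx : (p : ZMod (p ^ e)) ^ k ∣ y - x := by
        rw [← neg_sub x y]; exact dvd_neg.mpr hxy
      have h1 : (p : ZMod (p ^ e)) ^ (k + v) ∣ a * (y - x) := by
        rw [pow_add, mul_comm ((p : ZMod (p ^ e)) ^ k)]
        exact mul_dvd_mul hpv hyx
      have h2 : (p : ZMod (p ^ e)) ^ (k + v) ∣ a * (y - x) * (x⁻¹ * y⁻¹) := h1.mul_right _
      have h3 : a * (x⁻¹ * y⁻¹) * (y - x) = a * (y - x) * (x⁻¹ * y⁻¹) := by ring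
      rw [h3]; exact h2
    · have hy : ¬ IsUnit y := fun h => hx (hux.mpr h)
      rw [if_neg hx, if_neg hy]
      simp
  -- induction
  have key : ∀ n (x : ZMod (p ^ e)), (p : ZMod (p ^ e)) ^ (v + n * v) ∣ φ^[n + 1] x - φ^[n] b := by
    intro n
    induction n with
    | zero => intro x; simpa using base x
    | succ n ih =>
      intro x
      have h1 : φ^[n + 1 + 1] x = φ (φ^[n + 1] x) := Function.iterate_succ_apply' φ (n + 1) x
      have h2 : φ^[n + 1] b = φ (φ^[n] b) := Function.iterate_succ_apply' φ n b
      rw [h1, h2]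
      have hE : v + (n + 1) * v = (v + n * v) + v := by ring
      rw [hE]
      exact step (v + n * v) _ _ (by omega) (ih x)
  -- arithmetic on l
  have hl1 : 1 ≤ l := by
    exact (Nat.one_le_div_iff (by omega)).mpr (by omega)
  have hlv : e ≤ l * v := by
    have h1 := Nat.div_add_mod (e + v - 1) v
    have h2 : (e + v - 1) % v < v := Nat.mod_lt _ (by omega)
    have : l * v = v * ((e + v - 1) / v) := by rw [mul_comm]
    omega
  -- p^(l*v) = 0
  have hzero : (p : ZMod (p ^ e)) ^ (l * v) = 0 := by
    have h1 : (p : ZMod (p ^ e)) ^ e = 0 := by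
      rw [← Nat.cast_pow, ZMod.natCast_self]
    calc (p : ZMod (p ^ e)) ^ (l * v) = (p : ZMod (p ^ e)) ^ e * (p : ZMod (p ^ e)) ^ (l * v - e) := by
          rw [← pow_add]; congr 1; omega
      _ = 0 := by rw [h1, zero_mul]
  have main : ∀ x0 : ZMod (p ^ e), φ^[l] x0 = φ^[l - 1] b := by
    intro x0
    have hE : v + (l - 1) * v = l * v := by
      have h3 : l - 1 + 1 = l := by omega
      calc v + (l - 1) * v = (l - 1 + 1) * v := by ring
        _ = l * v := by rw [h3]
    have h := key (l - 1) x0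
    rw [hE, hzero] at h
    have h2 : φ^[l - 1 + 1] x0 - φ^[l - 1] b = 0 := zero_dvd_iff.mp h
    have h3 : l - 1 + 1 = l := by omega
    rw [h3] at h2
    exact sub_eq_zero.mp h2
  refine ⟨main, ?_⟩
  have : φ (φ^[l - 1] b) = φ^[l] b := by
    rw [← Function.iterate_succ_apply' φ (l - 1) b]
    congr 1
    omega
  rw [this, main b]
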